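/- Let X be a nominal set and ~ an equivariant equivalence relation on X (i.e., x ~ y implies π·x ~ π·y for all finite permutations π). Then the quotient X/~ with the induced action is a nominal set, and for each equivalence class C, supp(C) = ⋂{supp(g) : g ∈ C}. -/

import Mathlib

/-- The countably infinite set of atoms. -/
abbrev Atom : Type := ℕ

/-- The domain of a permutation: the atoms it moves. -/
def pdom (π : Equiv.Perm Atom) : Set Atom := {a | π a ≠ a}

/-- The group `Perm(𝔸)` of finite (finitely supported) permutations of atoms. -/
def FinPerm : Subgroup (Equiv.Perm Atom) where
  carrier := {π | (pdom π).Finite}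
  one_mem' := by simp [pdom]
  mul_mem' := by
    intro π σ hπ hσ
    refine (Set.Finite.union hπ hσ).subset ?_
    intro a ha
    by_contra h
    simp only [Set.mem_union, pdom, Set.mem_setOf_eq, not_or, not_not] at h
    exact ha (by simp [pdom, Equiv.Perm.mul_apply, h.1, h.2])
  inv_mem' := by
    intro π hπ
    refine hπ.subset ?_
    intro a ha h
    apply ha
    calc π⁻¹ a = π⁻¹ (π a) := by rw [h]
    _ = a := by simp

/-- `B` supports `x` w.r.t. the action `act`: every finite permutation fixing `B`
pointwise fixes `x`. -/
def NSupports {X : Type*} (act : FinPerm → X → X) (B : Set Atom) (x : X) : Prop :=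
  ∀ π : FinPerm, (∀ a ∈ B, (π : Equiv.Perm Atom) a = a) → act π x = x

/-- `nsupp act x` is the least support of `x`: the intersection of all finite supports. -/
def nsupp {X : Type*} (act : FinPerm → X → X) (x : X) : Set Atom :=
  ⋂₀ {B : Set Atom | B.Finite ∧ NSupports act B x}

/-- `act` makes `X` into a nominal set: a lawful `FinPerm`-action all of whose
elements are finitely supported. -/
def IsNominal {X : Type*} (act : FinPerm → X → X) : Prop :=
  (∀ x, act 1 x = x) ∧ (∀ π σ x, act (π * σ) x = act π (act σ x)) ∧
  (∀ x, ∃ B : Set Atom, B.Finite ∧ NSupports act B x)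

/-- The transposition `(a b)` as a finite permutation. -/
def swapF (a b : Atom) : FinPerm :=
  ⟨Equiv.swap a b, by
    apply Set.Finite.subset ((Set.finite_singleton b).insert a)
    intro x hx
    by_contra h
    simp only [Set.mem_insert_iff, Set.mem_singleton_iff, not_or] at h
    exact hx (Equiv.swap_apply_of_ne_of_ne h.1 h.2)⟩

-- auxiliary lemmas

lemma act_fix_of_swaps {X : Type*} {act : FinPerm → X → X}
    (h1 : ∀ x, act 1 x = x) (hmul : ∀ π σ x, act (π * σ) x = act π (act σ x))
    (A : Set Atom) (x : X)
    (hsw : ∀ a b : Atom, a ∉ A → b ∉ A → act (swapF a b) x = x) :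
    ∀ n (π : FinPerm), (pdom (π : Equiv.Perm Atom)).ncard ≤ n →
      (∀ a ∈ A, (π : Equiv.Perm Atom) a = a) → act π x = x := by
  intro n
  induction n with
  | zero =>
    intro π hcard _
    have hfin : (pdom (π : Equiv.Perm Atom)).Finite := π.2
    have hemp : pdom (π : Equiv.Perm Atom) = ∅ := by
      have := Set.ncard_eq_zero hfin
      rw [← this]; omega
    have hπ1 : π = 1 := by
      apply Subtype.ext; ext a
      by_contra h
      exact (Set.eq_empty_iff_forall_notMem.1 hemp a) h
    rw [hπ1]; exact h1 x
  | succ n ih =>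
    intro π hcard hfix
    have hfin : (pdom (π : Equiv.Perm Atom)).Finite := π.2
    by_cases hemp : pdom (π : Equiv.Perm Atom) = ∅
    · have hπ1 : π = 1 := by
        apply Subtype.ext; ext a
        by_contra h
        exact (Set.eq_empty_iff_forall_notMem.1 hemp a) h
      rw [hπ1]; exact h1 x
    · obtain ⟨a, ha⟩ := Set.nonempty_iff_ne_empty.2 hemp
      set b := (π : Equiv.Perm Atom) a with hb
      have hab : b ≠ a := ha
      have hbpd : b ∈ pdom (π : Equiv.Perm Atom) := by
        intro hbb
        exact hab ((π : Equiv.Perm Atom).injective (by rw [hbb, ← hb]))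
      set σ : FinPerm := swapF a b * π with hσ
      have hσc : ∀ c, (σ : Equiv.Perm Atom) c = Equiv.swap a b ((π : Equiv.Perm Atom) c) :=
        fun c => rfl
      have hππ : π = swapF a b * σ := by
        rw [hσ, ← mul_assoc]
        have hss : swapF a b * swapF a b = 1 := Subtype.ext (Equiv.swap_mul_self a b)
        rw [hss, one_mul]
      have hσa : (σ : Equiv.Perm Atom) a = a := by
        rw [hσc, ← hb, Equiv.swap_apply_right]
      have hsub : pdom (σ : Equiv.Perm Atom) ⊆ pdom (π : Equiv.Perm Atom) \ {a} := by
        intro c hc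
        have hc' : (σ : Equiv.Perm Atom) c ≠ c := hc
        refine ⟨?_, ?_⟩
        · by_contra hcp
          have hcc : (π : Equiv.Perm Atom) c = c := not_not.1 hcp
          rw [hσc, hcc] at hc'
          have hcab : c = a ∨ c = b := by
            by_contra hor
            push_neg at hor
            exact hc' (Equiv.swap_apply_of_ne_of_ne hor.1 hor.2)
          rcases hcab with h' | h'
          · exact ha (h' ▸ hcc)
          · exact hbpd (h' ▸ hcc)
        · intro hca
          rw [Set.mem_singleton_iff] at hca
          exact hc' (hca ▸ hσa)
      have hcard' : (pdom (σ : Equiv.Perm Atom)).ncard ≤ n := by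
        have h1' : (pdom (σ : Equiv.Perm Atom)).ncard ≤
            (pdom (π : Equiv.Perm Atom) \ {a}).ncard :=
          Set.ncard_le_ncard hsub hfin.diff
        have h2' : (pdom (π : Equiv.Perm Atom) \ {a}).ncard <
            (pdom (π : Equiv.Perm Atom)).ncard :=
          Set.ncard_diff_singleton_lt_of_mem ha hfin
        omega
      have haA : a ∉ A := fun hA => ha (hfix a hA)
      have hbA : b ∉ A := fun hA => hbpd (hfix b hA)
      have hσfix : ∀ c ∈ A, (σ : Equiv.Perm Atom) c = c := by
        intro c hcA
        have hcc : (π : Equiv.Perm Atom) c = c := hfix c hcA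
        rw [hσc, hcc]
        exact Equiv.swap_apply_of_ne_of_ne (fun h => haA (h ▸ hcA)) (fun h => hbA (h ▸ hcA))
      rw [hππ, hmul, ih σ hcard' hσfix, hsw a b haA hbA]
/-- Conjugation trick: `act (swapF a b) x = x` when `(a c)` fixes `x` via one support
and `(b c)` via another. -/
lemma swap_conj {X : Type*} {act : FinPerm → X → X}
    (hmul : ∀ π σ x, act (π * σ) x = act π (act σ x)) {x : X} {a b c : Atom}
    (hba : b ≠ a) (hbc : b ≠ c)
    (hca : act (swapF c a) x = x) (hbc' : act (swapF b c) x = x) :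
    act (swapF a b) x = x := by
  have hid : swapF a b = swapF c a * swapF b c * swapF c a :=
    Subtype.ext (by
      show Equiv.swap a b = Equiv.swap c a * Equiv.swap b c * Equiv.swap c a
      rw [Equiv.swap_mul_swap_mul_swap hbc hba])
  rw [hid, hmul, hmul, hca, hbc', hca]

/-- Intersection of two finite supports is a support. -/
lemma nsupports_inter {X : Type*} {act : FinPerm → X → X}
    (h1 : ∀ x, act 1 x = x) (hmul : ∀ π σ x, act (π * σ) x = act π (act σ x))
    {x : X} {S1 S2 : Set Atom} (hf1 : S1.Finite) (hf2 : S2.Finite)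
    (hs1 : NSupports act S1 x) (hs2 : NSupports act S2 x) :
    NSupports act (S1 ∩ S2) x := by
  have hsw : ∀ a b : Atom, a ∉ S1 ∩ S2 → b ∉ S1 ∩ S2 → act (swapF a b) x = x := by
    intro a b haI hbI
    by_cases hab : a = b
    · subst hab
      have : swapF a a = 1 := Subtype.ext (Equiv.swap_self a)
      rw [this]; exact h1 x
    · -- pick fresh c
      obtain ⟨c, hc⟩ : ∃ c, c ∉ S1 ∪ S2 ∪ {a, b} :=
        Set.Infinite.nonempty (Set.Finite.infinite_compl
          (((hf1.union hf2).union ((Set.finite_singleton b).insert a))))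
      simp only [Set.mem_union, Set.mem_insert_iff, Set.mem_singleton_iff, not_or] at hc
      obtain ⟨⟨hc1, hc2⟩, hca, hcb⟩ := hc
      have swS1 : ∀ u v : Atom, u ∉ S1 → v ∉ S1 → act (swapF u v) x = x := by
        intro u v hu hv
        apply hs1
        intro d hd
        exact Equiv.swap_apply_of_ne_of_ne (fun h => hu (h ▸ hd)) (fun h => hv (h ▸ hd))
      have swS2 : ∀ u v : Atom, u ∉ S2 → v ∉ S2 → act (swapF u v) x = x := by
        intro u v hu hv
        apply hs2
        intro d hd
        exact Equiv.swap_apply_of_ne_of_ne (fun h => hu (h ▸ hd)) (fun h => hv (h ▸ hd))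
      simp only [Set.mem_inter_iff, not_and] at haI hbI
      by_cases ha1 : a ∈ S1
      · have ha2 : a ∉ S2 := haI ha1
        by_cases hb2 : b ∈ S2
        · have hb1 : b ∉ S1 := fun h => (hbI h) hb2
          -- a ∉ S2, b ∉ S1 : conj with (c a) via S2 and (b c) via S1
          exact swap_conj hmul (Ne.symm hab) (fun h => hcb h.symm)
            (swS2 c a hc2 ha2) (swS1 b c hb1 hc1)
        · exact swS2 a b ha2 hb2
      · by_cases hb1 : b ∈ S1
        · have hb2 : b ∉ S2 := hbI hb1
          -- a ∉ S1, b ∉ S2 : symmetric, swap a b = swap b a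
          have : swapF a b = swapF b a := Subtype.ext (Equiv.swap_comm a b)
          rw [this]
          exact swap_conj hmul hab (fun h => hca h.symm)
            (swS2 c b hc2 hb2) (swS1 a c ha1 hc1)
        · exact swS1 a b ha1 hb1
  intro π hπ
  exact act_fix_of_swaps h1 hmul (S1 ∩ S2) x hsw
    (pdom (π : Equiv.Perm Atom)).ncard π le_rfl hπ
/-- `nsupp` of a finitely supported element is itself a finite support. -/
lemma nsupp_spec {X : Type*} {act : FinPerm → X → X}
    (h1 : ∀ x, act 1 x = x) (hmul : ∀ π σ x, act (π * σ) x = act π (act σ x))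
    {x : X} (hex : ∃ B : Set Atom, B.Finite ∧ NSupports act B x) :
    (nsupp act x).Finite ∧ NSupports act (nsupp act x) x := by
  classical
  have hn : ∃ n, ∃ B : Set Atom, B.Finite ∧ NSupports act B x ∧ B.ncard = n := by
    obtain ⟨B, hBf, hBs⟩ := hex
    exact ⟨B.ncard, B, hBf, hBs, rfl⟩
  obtain ⟨M, hMf, hMs, hMc⟩ := Nat.find_spec hn
  have hMmin : ∀ B : Set Atom, B.Finite → NSupports act B x → M ⊆ B := by
    intro B hBf hBs
    have hI : NSupports act (M ∩ B) x := nsupports_inter h1 hmul hMf hBf hMs hBs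
    have hle : Nat.find hn ≤ (M ∩ B).ncard :=
      Nat.find_min' hn ⟨M ∩ B, hMf.inter_of_left _, hI, rfl⟩
    have heq : M ∩ B = M :=
      Set.eq_of_subset_of_ncard_le Set.inter_subset_left (by omega) hMf
    intro c hc
    rw [← heq] at hc
    exact hc.2
  have hMeq : nsupp act x = M := by
    apply Set.Subset.antisymm
    · intro c hc
      exact hc M ⟨hMf, hMs⟩
    · intro c hc
      intro B hB
      exact hMmin B hB.1 hB.2 hc
  rw [hMeq]
  exact ⟨hMf, hMs⟩

/-- Equivariance of supports. -/
lemma nsupports_image {X : Type*} {act : FinPerm → X → X}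
    (hmul : ∀ π σ x, act (π * σ) x = act π (act σ x))
    {x : X} {B : Set Atom} (π : FinPerm) (hB : NSupports act B x) :
    NSupports act ((π : Equiv.Perm Atom) '' B) (act π x) := by
  intro σ hσ
  have hfix : ∀ a ∈ B, ((π⁻¹ * σ * π : FinPerm) : Equiv.Perm Atom) a = a := by
    intro a ha
    have hσa : (σ : Equiv.Perm Atom) ((π : Equiv.Perm Atom) a) = (π : Equiv.Perm Atom) a :=
      hσ _ ⟨a, ha, rfl⟩
    show (π : Equiv.Perm Atom)⁻¹ ((σ : Equiv.Perm Atom) ((π : Equiv.Perm Atom) a)) = a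
    rw [hσa]
    exact (by simp)
  have h2 : act (π⁻¹ * σ * π) x = x := hB _ hfix
  have h3 : σ * π = π * (π⁻¹ * σ * π) := by group
  calc act σ (act π x) = act (σ * π) x := (hmul σ π x).symm
    _ = act π (act (π⁻¹ * σ * π) x) := by rw [h3, hmul]
    _ = act π x := by rw [h2]

theorem stmt11' {X : Type*} (act : FinPerm → X → X) (hnom : IsNominal act)
    (r : Setoid X)
    (hequi : ∀ (π : FinPerm) (x y : X), r.r x y → r.r (act π x) (act π y)) :
    ∃ qact : FinPerm → Quotient r → Quotient r,
      (∀ (π : FinPerm) (x : X), qact π (Quotient.mk r x) = Quotient.mk r (act π x)) ∧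
      IsNominal qact ∧
      ∀ C : Quotient r,
        nsupp qact C = ⋂ g ∈ {g : X | Quotient.mk r g = C}, nsupp act g := by
  obtain ⟨h1, hmul, hex⟩ := hnom
  set qact : FinPerm → Quotient r → Quotient r :=
    fun π => Quotient.map (act π) (fun x y h => hequi π x y h) with hqdef
  have hmk : ∀ (π : FinPerm) (x : X),
      qact π (Quotient.mk r x) = Quotient.mk r (act π x) := fun π x => rfl
  have hsupp_lift : ∀ (B : Set Atom) (g : X),
      NSupports act B g → NSupports qact B (Quotient.mk r g) := by
    intro B g hB π hπ
    rw [hmk, hB π hπ]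
  have hnomq : IsNominal qact := by
    refine ⟨?_, ?_, ?_⟩
    · intro C
      induction C using Quotient.ind with
      | _ x => show Quotient.mk r (act 1 x) = Quotient.mk r x; rw [h1]
    · intro π σ C
      induction C using Quotient.ind with
      | _ x =>
        show Quotient.mk r (act (π * σ) x) = Quotient.mk r (act π (act σ x))
        rw [hmul]
    · intro C
      induction C using Quotient.ind with
      | _ x =>
        obtain ⟨B, hBf, hBs⟩ := hex x
        exact ⟨B, hBf, hsupp_lift B x hBs⟩
  refine ⟨qact, hmk, hnomq, ?_⟩
  intro C
  induction C using Quotient.ind with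
  | _ g0 =>
  have hCspec := nsupp_spec hnomq.1 hnomq.2.1 (hnomq.2.2 (Quotient.mk r g0))
  have hg0spec := nsupp_spec h1 hmul (hex g0)
  ext a
  simp only [Set.mem_iInter, Set.mem_setOf_eq]
  constructor
  · intro haC g hg
    refine Set.mem_sInter.2 ?_
    intro B hB
    exact Set.mem_sInter.1 haC B ⟨hB.1, hg ▸ hsupp_lift B g hB.2⟩
  · intro hall
    by_contra haC
    obtain ⟨b, hb⟩ : ∃ b,
        b ∉ (nsupp act g0 ∪ nsupp qact (Quotient.mk r g0)) ∪ {a} :=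
      Set.Infinite.nonempty (Set.Finite.infinite_compl
        ((hg0spec.1.union hCspec.1).union (Set.finite_singleton a)))
    simp only [Set.mem_union, Set.mem_singleton_iff, not_or] at hb
    obtain ⟨⟨hbg, hbC⟩, hba⟩ := hb
    have haCmem : a ∉ nsupp qact (Quotient.mk r g0) := haC
    have hfixS : ∀ c ∈ nsupp qact (Quotient.mk r g0),
        ((swapF a b : FinPerm) : Equiv.Perm Atom) c = c := by
      intro c hc
      exact Equiv.swap_apply_of_ne_of_ne (fun h => haCmem (h ▸ hc)) (fun h => hbC (h ▸ hc))
    have hCfix : qact (swapF a b) (Quotient.mk r g0) = Quotient.mk r g0 :=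
      hCspec.2 _ hfixS
    have hmkg : Quotient.mk r (act (swapF a b) g0) = Quotient.mk r g0 := by
      rw [← hmk]; exact hCfix
    have hag : a ∈ nsupp act (act (swapF a b) g0) := hall _ hmkg
    have himg : NSupports act ((Equiv.swap a b) '' (nsupp act g0)) (act (swapF a b) g0) :=
      nsupports_image hmul (swapF a b) hg0spec.2
    have haB : a ∈ (Equiv.swap a b) '' (nsupp act g0) :=
      Set.mem_sInter.1 hag _ ⟨hg0spec.1.image _, himg⟩
    obtain ⟨c, hc, hca⟩ := haB
    have hcb : c = b := by
      apply (Equiv.swap a b).injective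
      rw [hca, Equiv.swap_apply_right]
    exact hbg (hcb ▸ hc)

/-- the quotient of a nominal set by an equivariant equivalence
relation, with the induced action `π·[x] = [π·x]`, is a nominal set, and the
support of a class `C` is the intersection of the supports of its members. -/
theorem stmt11 {X : Type*} (act : FinPerm → X → X) (hnom : IsNominal act)
    (r : Setoid X)
    (hequi : ∀ (π : FinPerm) (x y : X), r.r x y → r.r (act π x) (act π y)) :
    ∃ qact : FinPerm → Quotient r → Quotient r,
      (∀ (π : FinPerm) (x : X), qact π (Quotient.mk r x) = Quotient.mk r (act π x)) ∧
      IsNominal qact ∧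
      ∀ C : Quotient r,
        nsupp qact C = ⋂ g ∈ {g : X | Quotient.mk r g = C}, nsupp act g := by
  exact stmt11' act hnom r hequi
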